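/- Let C be a circuit with initialization x_0 and let (ι^(i))_{i ∈ [ℓ+1]} be a pivotal sequence of inputs of C over BM^m. Then for every r ∈ N there exists a pivotal sequence of states (y^(j))_{j ∈ [ℓ'+1]} over BM^{m+k+n}, each attainable by C after r rounds (each y^(j) ∈ S^C_r(ι^(i) ∘ x_0) for some i), satisfying y^(0) ∈ S^C_r(ι^(0) ∘ x_0) and y^(ℓ') ∈ S^C_r(ι^(ℓ) ∘ x_0). -/

import Mathlib

set_option linter.unusedVariables false

attribute [local instance] Classical.propDecidable

/-- Signal values: stable `zero`, `one`, and metastable `meta`. -/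
inductive BM : Type
  | zero
  | one
  | metastable
  deriving DecidableEq

/-- Embedding of stable Boolean values into `BM`. -/
def BM.ofBool : Bool → BM
  | false => BM.zero
  | true => BM.one

/-- `inResM x y` means `y ∈ ResM(x)`, the set of partial resolutions of `x`. -/
def inResM {k : ℕ} (x y : Fin k → BM) : Prop :=
  ∀ i, x i = y i ∨ x i = BM.metastable

/-- `inRes x y` means `y ∈ Res(x)`, i.e. `y` is a complete (stable) resolution of `x`. -/
def inRes {k : ℕ} (x y : Fin k → BM) : Prop :=
  inResM x y ∧ ∀ i, y i ≠ BM.metastable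

/-- The complete resolutions of `x`, viewed as Boolean words. -/
def boolRes {k : ℕ} (x : Fin k → BM) : Set (Fin k → Bool) :=
  { z | ∀ i, x i = BM.ofBool (z i) ∨ x i = BM.metastable }

/-- The metastable (Kleene) extension `f_M : BM^k → BM` of a Boolean function
`f : B^k → B`: it outputs a stable value `b` iff all complete resolutions of the
input evaluate to `b` under `f`, and `meta` otherwise. -/
noncomputable def kleene {k : ℕ} (f : (Fin k → Bool) → Bool) (x : Fin k → BM) : BM :=
  if ∀ z ∈ boolRes x, f z = false then BM.zero
  else if ∀ z ∈ boolRes x, f z = true then BM.one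
  else BM.metastable

/-- Combinational logic with `m` input nodes: formulas built from inputs,
`BM`-constants (gates of indegree 0), and gates computing the metastable extension
of a Boolean function of their in-neighbors.  (A DAG evaluates exactly like the
formula obtained by unsharing, so this faithfully captures evaluation of
combinational logic DAGs.) -/
inductive Comb (m : ℕ) : Type
  | input : Fin m → Comb m
  | const : BM → Comb m
  | gate : (j : ℕ) → ((Fin j → Bool) → Bool) → (Fin j → Comb m) → Comb m

/-- Recursive evaluation of combinational logic on input `x ∈ BM^m`. -/
noncomputable def Comb.eval {m : ℕ} (x : Fin m → BM) : Comb m → BM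
  | .input i => x i
  | .const b => b
  | .gate _ f cs => kleene f (fun t => (cs t).eval x)

/-- Register types: simple, mask-0, mask-1. -/
inductive RegType : Type
  | simple
  | mask0
  | mask1
  deriving DecidableEq

/-- `regRead t b (o, b')` holds iff a register of type `t` in state `b` can be read
with read value `o`, moving to state `b'`:  a register in a stable state yields that
state and keeps it; a simple register in state `meta` yields `meta` and stays `meta`;
a mask-`c` register in state `meta` either yields `c` staying in state `meta`, or
yields `meta` changing its state to `1 - c`. -/
def regRead : RegType → BM → BM × BM → Prop
  | _, BM.zero, p => p = (BM.zero, BM.zero)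
  | _, BM.one, p => p = (BM.one, BM.one)
  | RegType.simple, BM.metastable, p => p = (BM.metastable, BM.metastable)
  | RegType.mask0, BM.metastable, p => p = (BM.zero, BM.metastable) ∨ p = (BM.metastable, BM.one)
  | RegType.mask1, BM.metastable, p => p = (BM.one, BM.metastable) ∨ p = (BM.metastable, BM.zero)

/-- A circuit with `m` input, `k` local and `n` output registers: a type for each
register, combinational logic with `m + k` input nodes (one per non-output register)
and `k + n` output nodes (one per non-input register), and an initialization of the
non-input registers. -/
structure Circuit (m k n : ℕ) : Type where
  inType : Fin m → RegType
  locType : Fin k → RegType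
  outType : Fin n → RegType
  logic : Fin (k + n) → Comb (m + k)
  init : Fin (k + n) → BM

/-- A state of a circuit: values of input, local, and output registers. -/
structure CState (m k n : ℕ) : Type where
  inp : Fin m → BM
  loc : Fin k → BM
  out : Fin n → BM

/-- A state as a word in `BM^{m+k+n}`. -/
def CState.toVec {m k n : ℕ} (s : CState m k n) : Fin (m + (k + n)) → BM :=
  Fin.append s.inp (Fin.append s.loc s.out)

/-- Read phase: `o ∈ BM^{m+k}` are possible read values of the non-output registers
in state `s`, and `ι'` the corresponding successor states of the input registers. -/
def ReadRel {m k n : ℕ} (C : Circuit m k n) (s : CState m k n)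
    (o : Fin (m + k) → BM) (ι' : Fin m → BM) : Prop :=
  (∀ i : Fin m, regRead (C.inType i) (s.inp i) (o (Fin.castAdd k i), ι' i)) ∧
  (∀ j : Fin k, ∃ st', regRead (C.locType j) (s.loc j) (o (Fin.natAdd m j), st'))

/-- Evaluation phase: `f^G` applied to the read values. -/
noncomputable def evalLogic {m k n : ℕ} (C : Circuit m k n) (o : Fin (m + k) → BM) :
    Fin (k + n) → BM :=
  fun j => (C.logic j).eval o

/-- `Write^C(s)`: possible values written to the non-input registers. -/
def WriteSet {m k n : ℕ} (C : Circuit m k n) (s : CState m k n) :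
    Set (Fin (k + n) → BM) :=
  { w | ∃ o ι', ReadRel C s o ι' ∧ inResM (evalLogic C o) w }

/-- Successor-state relation: read all non-output registers, evaluate the logic,
and write an arbitrary partial resolution of the result to the non-input registers. -/
def Succ {m k n : ℕ} (C : Circuit m k n) (s s' : CState m k n) : Prop :=
  ∃ o ι', ReadRel C s o ι' ∧ s'.inp = ι' ∧
    inResM (evalLogic C o) (Fin.append s'.loc s'.out)

/-- `reach C r s₀ = S^C_r(s₀)`: states reachable in `r` rounds from `s₀`. -/
def reach {m k n : ℕ} (C : Circuit m k n) : ℕ → CState m k n → Set (CState m k n)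
  | 0, s => {s}
  | r + 1, s => { t | ∃ u ∈ reach C r s, Succ C u t }

/-- The initial state of `C` with input `ι`. -/
def initState {m k n : ℕ} (C : Circuit m k n) (ι : Fin m → BM) : CState m k n :=
  ⟨ι, fun j => C.init (Fin.castAdd n j), fun j => C.init (Fin.natAdd k j)⟩

/-- `C_r(ι)`: possible outputs after `r` rounds on input `ι`. -/
def Cout {m k n : ℕ} (C : Circuit m k n) (r : ℕ) (ι : Fin m → BM) :
    Set (Fin n → BM) :=
  { y | ∃ s ∈ reach C r (initState C ι), y = s.out }

/-- `r` rounds of `C` implement `f` iff `C_r(ι) ⊆ f(ι)` for all inputs `ι`. -/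
def Implements {m k n : ℕ} (C : Circuit m k n) (r : ℕ)
    (f : (Fin m → BM) → Set (Fin n → BM)) : Prop :=
  ∀ ι, Cout C r ι ⊆ f ι

/-- All registers of the circuit are simple. -/
def OnlySimple {m k n : ℕ} (C : Circuit m k n) : Prop :=
  (∀ i, C.inType i = RegType.simple) ∧ (∀ j, C.locType j = RegType.simple) ∧
    (∀ j, C.outType j = RegType.simple)

/-- `Fun_S^r`: functions implementable by `r` rounds of circuits with only simple
registers. -/
def FunS (r m n : ℕ) : Set ((Fin m → BM) → Set (Fin n → BM)) :=
  { f | ∃ k, ∃ C : Circuit m k n, OnlySimple C ∧ Implements C r f }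

/-- `Fun_M^r`: functions implementable by `r` rounds of circuits with arbitrary
register types. -/
def FunM (r m n : ℕ) : Set ((Fin m → BM) → Set (Fin n → BM)) :=
  { f | ∃ k, ∃ C : Circuit m k n, Implements C r f }

/-- A pivotal sequence over `BM^N`: consecutive elements differ in exactly one bit,
and that bit is `meta` in one of the two elements. -/
def PivotalSeq {N ℓ : ℕ} (x : Fin (ℓ + 1) → Fin N → BM) : Prop :=
  ∀ i : Fin ℓ,
    ∃ j : Fin N,
      x i.castSucc j ≠ x i.succ j ∧
      (x i.castSucc j = BM.metastable ∨ x i.succ j = BM.metastable) ∧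
      ∀ j' : Fin N, x i.castSucc j' ≠ x i.succ j' → j' = j

/-- A function `f : BM^m → Pow(BM^n)` is natural iff it is bit-wise and closed
(a product of component functions each taking values in `{{0}, {1}, BM}`)
and specific (stabilizing the input restricts the output). -/
def IsNatural {m n : ℕ} (f : (Fin m → BM) → Set (Fin n → BM)) : Prop :=
  (∃ g : Fin n → (Fin m → BM) → Set BM,
      (∀ i x, g i x = {BM.zero} ∨ g i x = {BM.one} ∨ g i x = (Set.univ : Set BM)) ∧
      (∀ x, f x = { y | ∀ i, y i ∈ g i x })) ∧
  (∀ x y, inRes x y → f y ⊆ f x)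

/-- The `i`-th component of the metastable closure of `f : B^m → B^n`. -/
noncomputable def mclosureC {m n : ℕ} (f : (Fin m → Bool) → Fin n → Bool)
    (x : Fin m → BM) (i : Fin n) : Set BM :=
  if ∀ z ∈ boolRes x, f z i = false then {BM.zero}
  else if ∀ z ∈ boolRes x, f z i = true then {BM.one}
  else Set.univ

/-- The metastable closure `[f]_M : BM^m → Pow(BM^n)` of `f : B^m → B^n`. -/
noncomputable def mclosure {m n : ℕ} (f : (Fin m → Bool) → Fin n → Bool)
    (x : Fin m → BM) : Set (Fin n → BM) :=
  { y | ∀ i, y i ∈ mclosureC f x i }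

/-! ### Auxiliary development -/

section PivAux

open Relation

variable {m k n N : ℕ}

/-- Adjacency for pivotal sequences. -/
def vadj {N : ℕ} (a b : Fin N → BM) : Prop :=
  ∃ j, a j ≠ b j ∧ (a j = BM.metastable ∨ b j = BM.metastable) ∧ ∀ j', a j' ≠ b j' → j' = j

/-- One-sided adjacency: `b` is the metastable variant. -/
def madj {N : ℕ} (a b : Fin N → BM) : Prop :=
  ∃ j, a j ≠ b j ∧ b j = BM.metastable ∧ ∀ j', a j' ≠ b j' → j' = j

lemma madj_vadj {a b : Fin N → BM} (h : madj a b) : vadj a b := by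
  obtain ⟨j, h1, h2, h3⟩ := h
  exact ⟨j, h1, Or.inr h2, h3⟩

lemma vadj_symm {a b : Fin N → BM} (h : vadj a b) : vadj b a := by
  obtain ⟨j, h1, h2, h3⟩ := h
  exact ⟨j, h1.symm, h2.symm, fun j' hj' => h3 j' hj'.symm⟩

lemma madj_vadj' {a b : Fin N → BM} (h : madj a b) : vadj b a :=
  vadj_symm (madj_vadj h)

lemma vadj_cases {a b : Fin N → BM} (h : vadj a b) : madj a b ∨ madj b a := by
  obtain ⟨j, h1, h2, h3⟩ := h
  rcases h2 with h2 | h2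
  · exact Or.inr ⟨j, h1.symm, h2, fun j' hj' => h3 j' hj'.symm⟩
  · exact Or.inl ⟨j, h1, h2, h3⟩

lemma inResM_refl {x : Fin N → BM} : inResM x x := fun _ => Or.inl rfl

lemma inResM_trans {x y z : Fin N → BM} (h1 : inResM x y) (h2 : inResM y z) :
    inResM x z := by
  intro i
  rcases h1 i with h | h
  · rcases h2 i with h' | h'
    · exact Or.inl (h.trans h')
    · exact Or.inr (h.trans h')
  · exact Or.inr h

lemma boolRes_nonempty (x : Fin N → BM) : ∃ z, z ∈ boolRes x := by
  refine ⟨fun i => decide (x i = BM.one), fun i => ?_⟩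
  cases h : x i <;> simp [BM.ofBool, h]

lemma boolRes_anti {x y : Fin N → BM} (h : inResM x y) : boolRes y ⊆ boolRes x := by
  intro z hz i
  rcases h i with h' | h'
  · rcases hz i with h'' | h''
    · exact Or.inl (h'.trans h'')
    · exact Or.inr (h'.trans h'')
  · exact Or.inr h'

lemma kleene_mono (f : (Fin N → Bool) → Bool) {x y : Fin N → BM} (h : inResM x y) :
    kleene f x = kleene f y ∨ kleene f x = BM.metastable := by
  unfold kleene
  by_cases h0 : ∀ z ∈ boolRes x, f z = false
  · left
    rw [if_pos h0, if_pos (fun z hz => h0 z (boolRes_anti h hz))]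
  · by_cases h1 : ∀ z ∈ boolRes x, f z = true
    · left
      have h0' : ¬ ∀ z ∈ boolRes y, f z = false := by
        obtain ⟨z, hz⟩ := boolRes_nonempty y
        intro hc
        have ht := h1 z (boolRes_anti h hz)
        have hf := hc z hz
        simp [ht] at hf
      rw [if_neg h0, if_pos h1, if_neg h0',
        if_pos (fun z hz => h1 z (boolRes_anti h hz))]
    · right
      rw [if_neg h0, if_neg h1]

lemma eval_mono (c : Comb m) : ∀ {x y : Fin m → BM}, inResM x y →
    c.eval x = c.eval y ∨ c.eval x = BM.metastable := by
  induction c with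
  | input i => intro x y h; exact h i
  | const b => intro x y h; exact Or.inl rfl
  | gate j f cs ih =>
    intro x y h
    exact kleene_mono f (fun t => ih t h)

lemma evalLogic_mono (C : Circuit m k n) {o o' : Fin (m + k) → BM}
    (h : inResM o o') : inResM (evalLogic C o) (evalLogic C o') :=
  fun j => eval_mono (C.logic j) h

/-! ### State/vector plumbing -/

def stateOf {m k n : ℕ} (x : Fin (m + (k + n)) → BM) : CState m k n :=
  ⟨fun i => x (Fin.castAdd (k + n) i), fun j => x (Fin.natAdd m (Fin.castAdd n j)),
   fun j => x (Fin.natAdd m (Fin.natAdd k j))⟩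

@[simp] lemma stateOf_inp (x : Fin (m + (k + n)) → BM) (i : Fin m) :
    (stateOf (m := m) (k := k) (n := n) x).inp i = x (Fin.castAdd (k + n) i) := rfl

@[simp] lemma stateOf_loc (x : Fin (m + (k + n)) → BM) (j : Fin k) :
    (stateOf (m := m) (k := k) (n := n) x).loc j = x (Fin.natAdd m (Fin.castAdd n j)) := rfl

@[simp] lemma stateOf_out (x : Fin (m + (k + n)) → BM) (j : Fin n) :
    (stateOf (m := m) (k := k) (n := n) x).out j = x (Fin.natAdd m (Fin.natAdd k j)) := rfl

@[simp] lemma toVec_castAdd (s : CState m k n) (i : Fin m) :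
    s.toVec (Fin.castAdd (k + n) i) = s.inp i := by
  simp [CState.toVec, Fin.append_left]

lemma toVec_natAdd (s : CState m k n) (q : Fin (k + n)) :
    s.toVec (Fin.natAdd m q) = Fin.append s.loc s.out q := by
  simp [CState.toVec, Fin.append_right]

@[simp] lemma toVec_locIdx (s : CState m k n) (j : Fin k) :
    s.toVec (Fin.natAdd m (Fin.castAdd n j)) = s.loc j := by
  rw [toVec_natAdd, Fin.append_left]

@[simp] lemma toVec_outIdx (s : CState m k n) (j : Fin n) :
    s.toVec (Fin.natAdd m (Fin.natAdd k j)) = s.out j := by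
  rw [toVec_natAdd, Fin.append_right]

lemma fin_split (q : Fin (m + (k + n))) :
    (∃ i : Fin m, q = Fin.castAdd (k + n) i) ∨
    (∃ j : Fin k, q = Fin.natAdd m (Fin.castAdd n j)) ∨
    (∃ j : Fin n, q = Fin.natAdd m (Fin.natAdd k j)) := by
  refine Fin.addCases (fun i => Or.inl ⟨i, rfl⟩) (fun q' => ?_) q
  exact Fin.addCases (fun j => Or.inr (Or.inl ⟨j, rfl⟩))
    (fun j => Or.inr (Or.inr ⟨j, rfl⟩)) q'

@[simp] lemma toVec_stateOf (x : Fin (m + (k + n)) → BM) :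
    (stateOf (m := m) (k := k) (n := n) x).toVec = x := by
  funext q
  rcases fin_split q with ⟨i, rfl⟩ | ⟨j, rfl⟩ | ⟨j, rfl⟩ <;> simp

lemma cstate_ext {s t : CState m k n} (h1 : s.inp = t.inp) (h2 : s.loc = t.loc)
    (h3 : s.out = t.out) : s = t := by
  cases s; cases t; simp_all

@[simp] lemma stateOf_toVec (s : CState m k n) : stateOf s.toVec = s := by
  refine cstate_ext ?_ ?_ ?_ <;> funext i <;> simp

lemma castAdd_ne_natAdd {a b : ℕ} (i : Fin a) (j : Fin b) :
    Fin.castAdd b i ≠ Fin.natAdd a j := by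
  intro h
  have h' := congrArg Fin.val h
  simp only [Fin.coe_castAdd, Fin.coe_natAdd] at h'
  have := i.isLt
  omega

lemma castAdd_inj {a b : ℕ} {i i' : Fin a} (h : Fin.castAdd b i = Fin.castAdd b i') :
    i = i' := by
  have h' := congrArg Fin.val h
  simp only [Fin.coe_castAdd] at h'
  exact Fin.ext h'

lemma natAdd_inj {a b : ℕ} {i i' : Fin b} (h : Fin.natAdd a i = Fin.natAdd a i') :
    i = i' := by
  have h' := congrArg Fin.val h
  simp only [Fin.coe_natAdd] at h'
  exact Fin.ext (by omega)

/-! ### regRead helpers -/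

def readB (t : RegType) : BM → BM × BM
  | BM.zero => (BM.zero, BM.zero)
  | BM.one => (BM.one, BM.one)
  | BM.metastable =>
    match t with
    | RegType.simple => (BM.metastable, BM.metastable)
    | RegType.mask0 => (BM.metastable, BM.one)
    | RegType.mask1 => (BM.metastable, BM.zero)

lemma regRead_readB (t : RegType) (b : BM) : regRead t b (readB t b) := by
  cases t <;> cases b <;> simp [regRead, readB]

lemma regRead_zero_eq {t : RegType} {p : BM × BM} (h : regRead t BM.zero p) :
    p = (BM.zero, BM.zero) := by
  cases t <;> exact h

lemma regRead_one_eq {t : RegType} {p : BM × BM} (h : regRead t BM.one p) :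
    p = (BM.one, BM.one) := by
  cases t <;> exact h

lemma readB_fst {t : RegType} {b : BM} {p : BM × BM} (h : regRead t b p) :
    (readB t b).1 = p.1 ∨ (readB t b).1 = BM.metastable := by
  cases t <;> cases b <;>
    first
      | (exact Or.inr rfl)
      | (rw [regRead_zero_eq h]; exact Or.inl rfl)
      | (rw [regRead_one_eq h]; exact Or.inl rfl)

lemma readB_snd {t : RegType} {b : BM} {p : BM × BM} (h : regRead t b p) :
    p.2 = (readB t b).2 ∨ p.2 = BM.metastable := by
  cases t <;> cases b <;>
    first
      | (rw [regRead_zero_eq h]; exact Or.inl rfl)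
      | (rw [regRead_one_eq h]; exact Or.inl rfl)
      | (simp only [regRead] at h; rw [h]; exact Or.inr rfl)
      | (simp only [regRead] at h;
         rcases h with h | h <;> rw [h] <;> simp [readB])

/-! ### bottom reads -/

def obot (C : Circuit m k n) (u : CState m k n) : Fin (m + k) → BM :=
  Fin.addCases (fun i => (readB (C.inType i) (u.inp i)).1)
    (fun j => (readB (C.locType j) (u.loc j)).1)

def ibot (C : Circuit m k n) (u : CState m k n) : Fin m → BM :=
  fun i => (readB (C.inType i) (u.inp i)).2

@[simp] lemma obot_castAdd (C : Circuit m k n) (u : CState m k n) (i : Fin m) :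
    obot C u (Fin.castAdd k i) = (readB (C.inType i) (u.inp i)).1 := by
  simp [obot]

@[simp] lemma obot_natAdd (C : Circuit m k n) (u : CState m k n) (j : Fin k) :
    obot C u (Fin.natAdd m j) = (readB (C.locType j) (u.loc j)).1 := by
  simp [obot]

lemma readRel_bot (C : Circuit m k n) (u : CState m k n) (ι2 : Fin m → BM)
    (h : ∀ i, ι2 i = ibot C u i) : ReadRel C u (obot C u) ι2 := by
  constructor
  · intro i
    rw [obot_castAdd, h i]
    exact regRead_readB _ _
  · intro j
    rw [obot_natAdd]
    exact ⟨(readB (C.locType j) (u.loc j)).2, regRead_readB _ _⟩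

lemma obot_le {C : Circuit m k n} {u : CState m k n} {o : Fin (m + k) → BM}
    {ι' : Fin m → BM} (h : ReadRel C u o ι') : inResM (obot C u) o := by
  intro q
  refine Fin.addCases (fun i => ?_) (fun j => ?_) q
  · rw [obot_castAdd]
    exact readB_fst (h.1 i)
  · rw [obot_natAdd]
    obtain ⟨st', hst⟩ := h.2 j
    exact readB_fst hst

lemma succ_nonempty (C : Circuit m k n) (u : CState m k n) : ∃ t, Succ C u t := by
  refine ⟨⟨ibot C u, fun j => evalLogic C (obot C u) (Fin.castAdd n j),
    fun j => evalLogic C (obot C u) (Fin.natAdd k j)⟩,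
    obot C u, ibot C u, readRel_bot C u _ (fun _ => rfl), rfl, ?_⟩
  have happ : Fin.append (fun j => evalLogic C (obot C u) (Fin.castAdd n j))
      (fun j => evalLogic C (obot C u) (Fin.natAdd k j)) = evalLogic C (obot C u) := by
    funext q
    refine Fin.addCases (fun j => ?_) (fun j => ?_) q
    · rw [Fin.append_left]
    · rw [Fin.append_right]
  rw [happ]
  exact inResM_refl

lemma mem_reach_succ {C : Circuit m k n} {r : ℕ} {s u t : CState m k n}
    (hu : u ∈ reach C r s) (ht : Succ C u t) : t ∈ reach C (r + 1) s :=
  ⟨u, hu, ht⟩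

lemma reach_nonempty (C : Circuit m k n) (r : ℕ) (s : CState m k n) :
    ∃ t, t ∈ reach C r s := by
  induction r with
  | zero => exact ⟨s, rfl⟩
  | succ r ih =>
    obtain ⟨t, ht⟩ := ih
    obtain ⟨t', ht'⟩ := succ_nonempty C t
    exact ⟨t', mem_reach_succ ht ht'⟩

/-! ### interpolation -/

lemma interpolate (S : (Fin N → BM) → Prop) :
    ∀ (d : ℕ) (a b : Fin N → BM),
      (Finset.univ.filter (fun i => a i ≠ b i)).card = d →
      (∀ c : Fin N → BM, (∀ i, c i = a i ∨ c i = b i) → S c) →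
      (∀ i, a i ≠ b i → a i = BM.metastable ∨ b i = BM.metastable) →
      Relation.ReflTransGen (fun x y => vadj x y ∧ S x ∧ S y) a b := by
  intro d
  induction d using Nat.strong_induction_on with
  | _ d IH =>
    intro a b hcard hS hM
    by_cases hab : ∀ i, a i = b i
    · have : a = b := funext hab
      rw [this]
    · push_neg at hab
      obtain ⟨j, hj⟩ := hab
      have hS' : ∀ c : Fin N → BM,
          (∀ i, c i = Function.update a j (b j) i ∨ c i = b i) → S c := by
        intro c hc
        refine hS c (fun i => ?_)
        rcases hc i with h | h
        · by_cases hij : i = j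
          · subst hij
            rw [h, Function.update_self]
            exact Or.inr rfl
          · rw [h, Function.update_of_ne hij]
            exact Or.inl rfl
        · exact Or.inr h
      have hM' : ∀ i, Function.update a j (b j) i ≠ b i →
          Function.update a j (b j) i = BM.metastable ∨ b i = BM.metastable := by
        intro i hne
        by_cases hij : i = j
        · subst hij
          rw [Function.update_self] at hne
          exact absurd rfl hne
        · rw [Function.update_of_ne hij] at hne ⊢
          exact hM i hne
      have hlt : (Finset.univ.filter
          (fun i => Function.update a j (b j) i ≠ b i)).card < d := by
        rw [← hcard]
        apply Finset.card_lt_card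
        rw [Finset.ssubset_iff_of_subset]
        · refine ⟨j, ?_, ?_⟩
          · simp [hj]
          · simp
        · intro i hi
          simp only [Finset.mem_filter, Finset.mem_univ, true_and] at hi ⊢
          by_cases hij : i = j
          · subst hij
            rw [Function.update_self] at hi
            exact absurd rfl hi
          · rwa [Function.update_of_ne hij] at hi
      refine Relation.ReflTransGen.head ⟨⟨j, ?_, ?_, ?_⟩, hS a (fun _ => Or.inl rfl),
        hS' _ (fun _ => Or.inl rfl)⟩ (IH _ hlt _ b rfl hS' hM')
      · rw [Function.update_self]
        exact hj
      · rcases hM j hj with h | h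
        · exact Or.inl h
        · rw [Function.update_self]
          exact Or.inr h
      · intro j' hne
        by_contra hne'
        rw [Function.update_of_ne hne'] at hne
        exact hne rfl

end PivAux
section PivAux2

variable {m k n : ℕ}

/-- Transfer of successors across a one-bit metastable perturbation. -/
lemma transfer {C : Circuit m k n} {u v s : CState m k n}
    (huv : madj u.toVec v.toVec) (hs : Succ C u s) :
    ∃ t, Succ C v t ∧ (t = s ∨ madj s.toVec t.toVec) := by
  obtain ⟨q, hne, hmeta, huniq⟩ := huv
  obtain ⟨o, ι', ⟨hri, hrl⟩, hsi, hw⟩ := hs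
  rcases fin_split q with ⟨p, rfl⟩ | ⟨p, rfl⟩ | ⟨p, rfl⟩
  · -- q is an input-register coordinate
    have hLeq : u.loc = v.loc := by
      funext j
      by_contra hne'
      have h := huniq (Fin.natAdd m (Fin.castAdd n j)) (by simpa using hne')
      exact (castAdd_ne_natAdd p (Fin.castAdd n j)) h.symm
    have hOeq : u.out = v.out := by
      funext j
      by_contra hne'
      have h := huniq (Fin.natAdd m (Fin.natAdd k j)) (by simpa using hne')
      exact (castAdd_ne_natAdd p (Fin.natAdd k j)) h.symm
    have hIeq : ∀ i, i ≠ p → u.inp i = v.inp i := by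
      intro i hip
      by_contra hne'
      exact hip (castAdd_inj (huniq (Fin.castAdd (k + n) i) (by simpa using hne')))
    have hIm : v.inp p = BM.metastable := by simpa using hmeta
    have hIne : u.inp p ≠ v.inp p := by simpa using hne
    have hb : u.inp p ≠ BM.metastable := fun hc => hIne (hc.trans hIm.symm)
    have hforced : o (Fin.castAdd k p) = u.inp p ∧ ι' p = u.inp p := by
      have h := hri p
      cases hbv : u.inp p with
      | zero =>
        rw [hbv] at h
        have h' := regRead_zero_eq h
        rw [Prod.mk.injEq] at h'
        exact ⟨h'.1, h'.2⟩
      | one =>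
        rw [hbv] at h
        have h' := regRead_one_eq h
        rw [Prod.mk.injEq] at h'
        exact ⟨h'.1, h'.2⟩
      | metastable => exact absurd hbv hb
    obtain ⟨hfo, hfι⟩ := hforced
    -- ending A: the input register stays metastable
    have endA : ∀ rv : BM, regRead (C.inType p) BM.metastable (rv, BM.metastable) →
        (rv = o (Fin.castAdd k p) ∨ rv = BM.metastable) →
        ∃ t, Succ C v t ∧ (t = s ∨ madj s.toVec t.toVec) := by
      intro rv hrv hle
      refine ⟨⟨Function.update ι' p BM.metastable, s.loc, s.out⟩,
        ⟨Function.update o (Fin.castAdd k p) rv, Function.update ι' p BM.metastable,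
          ⟨?_, ?_⟩, rfl, ?_⟩, Or.inr ?_⟩
      · intro i
        by_cases hip : i = p
        · subst hip
          rw [Function.update_self, Function.update_self, hIm]
          exact hrv
        · rw [Function.update_of_ne (fun hcon => hip (castAdd_inj hcon)),
            Function.update_of_ne hip, ← hIeq i hip]
          exact hri i
      · intro j
        rw [Function.update_of_ne (castAdd_ne_natAdd p j).symm, ← hLeq]
        exact hrl j
      · have hle' : inResM (Function.update o (Fin.castAdd k p) rv) o := by
          intro qq
          by_cases hq : qq = Fin.castAdd k p
          · subst hq
            rw [Function.update_self]
            rcases hle with h | h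
            · exact Or.inl h
            · exact Or.inr h
          · rw [Function.update_of_ne hq]
            exact Or.inl rfl
        exact inResM_trans (evalLogic_mono C hle') hw
      · refine ⟨Fin.castAdd (k + n) p, ?_, ?_, ?_⟩
        · simp only [toVec_castAdd, hsi]
          show ι' p ≠ Function.update ι' p BM.metastable p
          rw [Function.update_self, hfι]
          exact hb
        · show CState.toVec _ (Fin.castAdd (k + n) p) = BM.metastable
          simp only [toVec_castAdd]
          exact Function.update_self _ _ _
        · intro q' hq'
          rcases fin_split q' with ⟨i', rfl⟩ | ⟨j', rfl⟩ | ⟨j', rfl⟩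
          · by_cases hip : i' = p
            · rw [hip]
            · exfalso
              apply hq'
              simp only [toVec_castAdd, hsi]
              show ι' i' = Function.update ι' p BM.metastable i'
              rw [Function.update_of_ne hip]
          · exact absurd (by simp : s.toVec (Fin.natAdd m (Fin.castAdd n j')) =
              CState.toVec _ (Fin.natAdd m (Fin.castAdd n j'))) hq'
          · exact absurd (by simp : s.toVec (Fin.natAdd m (Fin.natAdd k j')) =
              CState.toVec _ (Fin.natAdd m (Fin.natAdd k j'))) hq'
    -- ending B: the input register resolves to the stable value
    have endB : regRead (C.inType p) BM.metastable (BM.metastable, ι' p) →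
        ∃ t, Succ C v t ∧ (t = s ∨ madj s.toVec t.toVec) := by
      intro hB
      refine ⟨s, ⟨Function.update o (Fin.castAdd k p) BM.metastable, ι',
        ⟨?_, ?_⟩, hsi, ?_⟩, Or.inl rfl⟩
      · intro i
        by_cases hip : i = p
        · subst hip
          rw [Function.update_self, hIm]
          exact hB
        · rw [Function.update_of_ne (fun hcon => hip (castAdd_inj hcon)), ← hIeq i hip]
          exact hri i
      · intro j
        rw [Function.update_of_ne (castAdd_ne_natAdd p j).symm, ← hLeq]
        exact hrl j
      · have hle' : inResM (Function.update o (Fin.castAdd k p) BM.metastable) o := by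
          intro qq
          by_cases hq : qq = Fin.castAdd k p
          · subst hq
            rw [Function.update_self]
            exact Or.inr rfl
          · rw [Function.update_of_ne hq]
            exact Or.inl rfl
        exact inResM_trans (evalLogic_mono C hle') hw
    cases hty : C.inType p with
    | simple =>
      refine endA BM.metastable ?_ (Or.inr rfl)
      rw [hty]
      rfl
    | mask0 =>
      cases hbv : u.inp p with
      | zero =>
        refine endA BM.zero ?_ (Or.inl (by rw [hfo, hbv]))
        rw [hty]
        exact Or.inl rfl
      | one =>
        refine endB ?_
        rw [hty, hfι, hbv]
        exact Or.inr rfl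
      | metastable => exact absurd hbv hb
    | mask1 =>
      cases hbv : u.inp p with
      | zero =>
        refine endB ?_
        rw [hty, hfι, hbv]
        exact Or.inr rfl
      | one =>
        refine endA BM.one ?_ (Or.inl (by rw [hfo, hbv]))
        rw [hty]
        exact Or.inl rfl
      | metastable => exact absurd hbv hb
  · -- q is a local-register coordinate
    have hIeq : u.inp = v.inp := by
      funext i
      by_contra hne'
      exact castAdd_ne_natAdd i (Fin.castAdd n p)
        (huniq (Fin.castAdd (k + n) i) (by simpa using hne'))
    have hOeq : u.out = v.out := by
      funext j
      by_contra hne'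
      have h := huniq (Fin.natAdd m (Fin.natAdd k j)) (by simpa using hne')
      exact (castAdd_ne_natAdd p j) (natAdd_inj h).symm
    have hLm : v.loc p = BM.metastable := by simpa using hmeta
    have hLeq : ∀ j, j ≠ p → u.loc j = v.loc j := by
      intro j hjp
      by_contra hne'
      have h := huniq (Fin.natAdd m (Fin.castAdd n j)) (by simpa using hne')
      exact hjp (castAdd_inj (natAdd_inj h))
    refine ⟨s, ⟨Function.update o (Fin.natAdd m p) BM.metastable, ι',
      ⟨?_, ?_⟩, hsi, ?_⟩, Or.inl rfl⟩
    · intro i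
      rw [Function.update_of_ne (castAdd_ne_natAdd i p), ← hIeq]
      exact hri i
    · intro j
      by_cases hjp : j = p
      · subst hjp
        rw [Function.update_self, hLm]
        cases hty : C.locType j with
        | simple => exact ⟨BM.metastable, rfl⟩
        | mask0 => exact ⟨BM.one, Or.inr rfl⟩
        | mask1 => exact ⟨BM.zero, Or.inr rfl⟩
      · rw [Function.update_of_ne (fun hcon => hjp (natAdd_inj hcon)), ← hLeq j hjp]
        exact hrl j
    · have hle' : inResM (Function.update o (Fin.natAdd m p) BM.metastable) o := by
        intro qq
        by_cases hq : qq = Fin.natAdd m p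
        · subst hq
          rw [Function.update_self]
          exact Or.inr rfl
        · rw [Function.update_of_ne hq]
          exact Or.inl rfl
      exact inResM_trans (evalLogic_mono C hle') hw
  · -- q is an output-register coordinate
    have hIeq : u.inp = v.inp := by
      funext i
      by_contra hne'
      exact castAdd_ne_natAdd i (Fin.natAdd k p)
        (huniq (Fin.castAdd (k + n) i) (by simpa using hne'))
    have hLeq : u.loc = v.loc := by
      funext j
      by_contra hne'
      have h := huniq (Fin.natAdd m (Fin.castAdd n j)) (by simpa using hne')
      exact (castAdd_ne_natAdd j p) (natAdd_inj h)
    refine ⟨s, ⟨o, ι', ⟨?_, ?_⟩, hsi, hw⟩, Or.inl rfl⟩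
    · intro i
      rw [← hIeq]
      exact hri i
    · intro j
      rw [← hLeq]
      exact hrl j

end PivAux2
section PivAux3

variable {m k n : ℕ}

def srel (C : Circuit m k n) (u : CState m k n) :
    CState m k n → CState m k n → Prop :=
  fun x y => vadj x.toVec y.toVec ∧ Succ C u x ∧ Succ C u y

/-- The state writing `w` after bottom reads. -/
def stW (C : Circuit m k n) (u : CState m k n) (w : Fin (k + n) → BM) :
    CState m k n :=
  stateOf (Fin.append (ibot C u) w)

lemma append_locout (s : CState m k n) (q : Fin (k + n)) :
    Fin.append s.loc s.out q = s.toVec (Fin.natAdd m q) := (toVec_natAdd s q).symm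

/-- Phase 1: from any successor to the corresponding bottom-read successor. -/
lemma phase1 {C : Circuit m k n} {u a : CState m k n} (ha : Succ C u a) :
    Relation.ReflTransGen (srel C u) a (stW C u (Fin.append a.loc a.out)) ∧
    inResM (evalLogic C (obot C u)) (Fin.append a.loc a.out) := by
  obtain ⟨o, ι', hr, hai, hw⟩ := ha
  have E : inResM (evalLogic C (obot C u)) (Fin.append a.loc a.out) :=
    inResM_trans (evalLogic_mono C (obot_le hr)) hw
  refine ⟨?_, E⟩
  set bvec : Fin (m + (k + n)) → BM :=
    Fin.append (ibot C u) (Fin.append a.loc a.out) with hbvec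
  have key : ∀ c : Fin (m + (k + n)) → BM,
      (∀ i, c i = a.toVec i ∨ c i = bvec i) → Succ C u (stateOf c) := by
    intro c hc
    have hlocout : ∀ q : Fin (k + n),
        c (Fin.natAdd m q) = Fin.append a.loc a.out q := by
      intro q
      rcases hc (Fin.natAdd m q) with h | h
      · rw [h, toVec_natAdd]
      · rw [h, hbvec, Fin.append_right]
    have hinp : ∀ i, c (Fin.castAdd (k + n) i) = ι' i ∨
        c (Fin.castAdd (k + n) i) = ibot C u i := by
      intro i
      rcases hc (Fin.castAdd (k + n) i) with h | h
      · left
        rw [h, toVec_castAdd, hai]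
      · right
        rw [h, hbvec, Fin.append_left]
    set omix : Fin (m + k) → BM :=
      Fin.addCases (fun i => if c (Fin.castAdd (k + n) i) = ι' i
        then o (Fin.castAdd k i) else obot C u (Fin.castAdd k i))
        (fun j => o (Fin.natAdd m j)) with homix
    have homixle : inResM omix o := by
      intro qq
      refine Fin.addCases (fun i => ?_) (fun j => ?_) qq
      · simp only [homix, Fin.addCases_left]
        by_cases hcase : c (Fin.castAdd (k + n) i) = ι' i
        · rw [if_pos hcase]
          exact Or.inl rfl
        · rw [if_neg hcase, obot_castAdd]
          exact readB_fst (hr.1 i)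
      · simp only [homix, Fin.addCases_right]
        exact Or.inl trivial
    refine ⟨omix, (stateOf c).inp, ⟨?_, ?_⟩, rfl, ?_⟩
    · intro i
      simp only [homix, Fin.addCases_left]
      by_cases hcase : c (Fin.castAdd (k + n) i) = ι' i
      · rw [if_pos hcase]
        show regRead _ _ (_, c (Fin.castAdd (k + n) i))
        rw [hcase]
        exact hr.1 i
      · rw [if_neg hcase, obot_castAdd]
        show regRead _ _ (_, c (Fin.castAdd (k + n) i))
        rw [(hinp i).resolve_left hcase]
        exact regRead_readB _ _
    · intro j
      simp only [homix, Fin.addCases_right]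
      exact hr.2 j
    · have happ : Fin.append (stateOf c).loc (stateOf c).out =
          Fin.append a.loc a.out := by
        funext q
        refine Fin.addCases (fun j => ?_) (fun j => ?_) q
        · rw [Fin.append_left, stateOf_loc, hlocout, Fin.append_left]
        · rw [Fin.append_right, stateOf_out, hlocout, Fin.append_right]
      rw [happ]
      exact inResM_trans (evalLogic_mono C homixle) hw
  have hM : ∀ i, a.toVec i ≠ bvec i → a.toVec i = BM.metastable ∨ bvec i = BM.metastable := by
    intro i hne
    rcases fin_split i with ⟨i', rfl⟩ | ⟨j', rfl⟩ | ⟨j', rfl⟩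
    · left
      rw [toVec_castAdd, hai] at hne ⊢
      rw [hbvec, Fin.append_left] at hne
      rcases readB_snd (hr.1 i') with h | h
      · exact absurd h hne
      · exact h
    · exfalso
      apply hne
      rw [toVec_locIdx, hbvec, Fin.append_right, Fin.append_left]
    · exfalso
      apply hne
      rw [toVec_outIdx, hbvec, Fin.append_right, Fin.append_right]
  have hres := interpolate (fun x => Succ C u (stateOf x)) _ a.toVec bvec rfl
    (fun c hc => key c hc) hM
  have hlift := Relation.ReflTransGen.lift (p := srel C u) (stateOf (m := m) (k := k) (n := n))
    (fun x y hxy => ⟨by rw [toVec_stateOf, toVec_stateOf]; exact hxy.1,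
      hxy.2.1, hxy.2.2⟩) _ _ hres
  rw [Function.onFun, stateOf_toVec] at hlift
  exact hlift

/-- Phase 2: between two bottom-read successors. -/
lemma mid {C : Circuit m k n} {u : CState m k n} {w w' : Fin (k + n) → BM}
    (hw : inResM (evalLogic C (obot C u)) w)
    (hw' : inResM (evalLogic C (obot C u)) w')
    (hM : ∀ p, w p ≠ w' p → w p = BM.metastable ∨ w' p = BM.metastable) :
    Relation.ReflTransGen (srel C u) (stW C u w) (stW C u w') := by
  have key : ∀ (w'' : Fin (k + n) → BM),
      inResM (evalLogic C (obot C u)) w'' → Succ C u (stW C u w'') := by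
    intro w'' hw''
    refine ⟨obot C u, (stW C u w'').inp, readRel_bot C u _ (fun i => ?_), rfl, ?_⟩
    · show Fin.append (ibot C u) w'' (Fin.castAdd (k + n) i) = _
      rw [Fin.append_left]
    · have happ : Fin.append (stW C u w'').loc (stW C u w'').out = w'' := by
        funext q
        refine Fin.addCases (fun j => ?_) (fun j => ?_) q
        · rw [Fin.append_left]
          show Fin.append (ibot C u) w'' (Fin.natAdd m (Fin.castAdd n j)) = _
          rw [Fin.append_right]
        · rw [Fin.append_right]
          show Fin.append (ibot C u) w'' (Fin.natAdd m (Fin.natAdd k j)) = _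
          rw [Fin.append_right]
      rw [happ]
      exact hw''
  have keymix : ∀ c : Fin (m + (k + n)) → BM,
      (∀ i, c i = Fin.append (ibot C u) w i ∨ c i = Fin.append (ibot C u) w' i) →
      Succ C u (stateOf c) := by
    intro c hc
    have hceq : c = Fin.append (ibot C u) (fun q => c (Fin.natAdd m q)) := by
      funext q
      refine Fin.addCases (fun i => ?_) (fun j => ?_) q
      · rw [Fin.append_left]
        rcases hc (Fin.castAdd (k + n) i) with h | h <;>
          rw [h, Fin.append_left]
      · rw [Fin.append_right]
    have hcw : inResM (evalLogic C (obot C u)) (fun q => c (Fin.natAdd m q)) := by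
      intro q
      show evalLogic C (obot C u) q = c (Fin.natAdd m q) ∨
        evalLogic C (obot C u) q = BM.metastable
      rcases hc (Fin.natAdd m q) with h | h
      · rw [h, Fin.append_right]
        exact hw q
      · rw [h, Fin.append_right]
        exact hw' q
    have := key _ hcw
    rwa [stW, ← hceq] at this
  have hMfull : ∀ i, Fin.append (ibot C u) w i ≠ Fin.append (ibot C u) w' i →
      Fin.append (ibot C u) w i = BM.metastable ∨
      Fin.append (ibot C u) w' i = BM.metastable := by
    intro i
    refine Fin.addCases (fun i' => ?_) (fun q => ?_) i <;> intro hne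
    · rw [Fin.append_left, Fin.append_left] at hne
      exact absurd rfl hne
    · rw [Fin.append_right, Fin.append_right] at hne ⊢
      exact hM q hne
  have hres := interpolate (fun x => Succ C u (stateOf x)) _
    (Fin.append (ibot C u) w) (Fin.append (ibot C u) w') rfl
    (fun c hc => keymix c hc) hMfull
  have hlift := Relation.ReflTransGen.lift (p := srel C u) (stateOf (m := m) (k := k) (n := n))
    (fun x y hxy => ⟨by rw [toVec_stateOf, toVec_stateOf]; exact hxy.1,
      hxy.2.1, hxy.2.2⟩) _ _ hres
  exact hlift

end PivAux3
section PivAux4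

variable {m k n : ℕ}

lemma succ_conn {C : Circuit m k n} {u a b : CState m k n}
    (ha : Succ C u a) (hb : Succ C u b) :
    Relation.ReflTransGen (srel C u) a b := by
  obtain ⟨c1, E1⟩ := phase1 ha
  obtain ⟨c2, E2⟩ := phase1 hb
  set w1 : Fin (k + n) → BM := Fin.append a.loc a.out with hw1
  set w2 : Fin (k + n) → BM := Fin.append b.loc b.out with hw2
  set wM : Fin (k + n) → BM := fun p => if w1 p = w2 p then w1 p else BM.metastable
    with hwM
  have EM : inResM (evalLogic C (obot C u)) wM := by
    intro p
    by_cases hpp : w1 p = w2 p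
    · have h := E1 p
      simp only [hwM, if_pos hpp]
      exact h
    · simp only [hwM, if_neg hpp]
      right
      rcases E1 p with h1 | h1
      · rcases E2 p with h2 | h2
        · exact absurd (h1.symm.trans h2) hpp
        · exact h2
      · exact h1
  have m1 : Relation.ReflTransGen (srel C u) (stW C u w1) (stW C u wM) := by
    refine mid E1 EM (fun p hne => Or.inr ?_)
    by_cases hpp : w1 p = w2 p
    · exfalso
      apply hne
      simp only [hwM, if_pos hpp]
    · simp only [hwM, if_neg hpp]
  have m2 : Relation.ReflTransGen (srel C u) (stW C u wM) (stW C u w2) := by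
    refine mid EM E2 (fun p hne => Or.inl ?_)
    by_cases hpp : w1 p = w2 p
    · exfalso
      apply hne
      simp only [hwM, if_pos hpp, hpp]
    · simp only [hwM, if_neg hpp]
  have symrel : Symmetric (srel C u) := fun x y h => ⟨vadj_symm h.1, h.2.2, h.2.1⟩
  exact ((c1.trans m1).trans m2).trans
    (letI : Std.Symm (srel C u) := ⟨fun a b h => symrel h⟩; (Relation.ReflTransGen.stdSymm (r := srel C u)).symm _ _ c2)

lemma reach_conn (C : Circuit m k n) (r : ℕ) (u₀ : CState m k n) :
    ∀ {s s' : CState m k n}, s ∈ reach C r u₀ → s' ∈ reach C r u₀ →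
      Relation.ReflTransGen
        (fun x y => vadj x.toVec y.toVec ∧ x ∈ reach C r u₀ ∧ y ∈ reach C r u₀)
        s s' := by
  induction r with
  | zero =>
    intro s s' hs hs'
    have h1 : s = u₀ := hs
    have h2 : s' = u₀ := hs'
    rw [h1, h2]
  | succ r IH =>
    intro s s' hs hs'
    obtain ⟨u₁, hu₁, hsu⟩ := hs
    obtain ⟨u₂, hu₂, hsu'⟩ := hs'
    have main : ∀ {w : CState m k n},
        Relation.ReflTransGen
          (fun x y => vadj x.toVec y.toVec ∧ x ∈ reach C r u₀ ∧ y ∈ reach C r u₀)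
          u₁ w →
        w ∈ reach C r u₀ → ∀ {x : CState m k n}, Succ C w x →
        Relation.ReflTransGen
          (fun x y => vadj x.toVec y.toVec ∧
            x ∈ reach C (r + 1) u₀ ∧ y ∈ reach C (r + 1) u₀) s x := by
      intro w hchain
      induction hchain with
      | refl =>
        intro _ x hx
        exact Relation.ReflTransGen.mono
          (fun p q hpq => ⟨hpq.1, mem_reach_succ hu₁ hpq.2.1,
            mem_reach_succ hu₁ hpq.2.2⟩) _ _ (succ_conn hsu hx)
      | @tail c w hcw hrel ih =>
        intro hw x hx
        obtain ⟨hvadj, hcr, hwr⟩ := hrel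
        rcases vadj_cases hvadj with hmadj | hmadj
        · obtain ⟨x₀, hx₀⟩ := succ_nonempty C c
          have chain1 := ih hcr hx₀
          obtain ⟨x₁, hx₁, hcase⟩ := transfer hmadj hx₀
          have chain2 : Relation.ReflTransGen
              (fun x y => vadj x.toVec y.toVec ∧
                x ∈ reach C (r + 1) u₀ ∧ y ∈ reach C (r + 1) u₀) s x₁ := by
            rcases hcase with rfl | hadj
            · exact chain1
            · exact chain1.tail ⟨madj_vadj hadj, mem_reach_succ hcr hx₀,
                mem_reach_succ hwr hx₁⟩
          exact chain2.trans (Relation.ReflTransGen.mono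
            (fun p q hpq => ⟨hpq.1, mem_reach_succ hwr hpq.2.1,
              mem_reach_succ hwr hpq.2.2⟩) _ _ (succ_conn hx₁ hx))
        · obtain ⟨t, ht, hcase⟩ := transfer hmadj hx
          have chain1 := ih hcr ht
          rcases hcase with rfl | hadj
          · exact chain1
          · exact chain1.tail ⟨madj_vadj' hadj, mem_reach_succ hcr ht,
              mem_reach_succ hwr hx⟩
    exact main (IH hu₁ hu₂) hu₂ hsu'

lemma transfer_reach {C : Circuit m k n} {u v : CState m k n}
    (huv : madj u.toVec v.toVec) :
    ∀ (r : ℕ) {s : CState m k n}, s ∈ reach C r u →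
      ∃ t, t ∈ reach C r v ∧ (t = s ∨ madj s.toVec t.toVec) := by
  intro r
  induction r with
  | zero =>
    intro s hs
    have h1 : s = u := hs
    refine ⟨v, rfl, Or.inr ?_⟩
    rw [h1]
    exact huv
  | succ r IH =>
    intro s hs
    obtain ⟨s₁, hs₁, hss⟩ := hs
    obtain ⟨t₁, ht₁, hcase⟩ := IH hs₁
    rcases hcase with rfl | hadj
    · exact ⟨s, mem_reach_succ ht₁ hss, Or.inl rfl⟩
    · obtain ⟨t, ht, hc⟩ := transfer hadj hss
      exact ⟨t, mem_reach_succ ht₁ ht, hc⟩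

lemma init_madj (C : Circuit m k n) {ι₁ ι₂ : Fin m → BM} (j : Fin m)
    (hne : ι₁ j ≠ ι₂ j) (hm : ι₂ j = BM.metastable)
    (huniq : ∀ j', ι₁ j' ≠ ι₂ j' → j' = j) :
    madj (initState C ι₁).toVec (initState C ι₂).toVec := by
  refine ⟨Fin.castAdd (k + n) j, ?_, ?_, ?_⟩
  · simpa [initState] using hne
  · simpa [initState] using hm
  · intro q' hq'
    rcases fin_split q' with ⟨i', rfl⟩ | ⟨j', rfl⟩ | ⟨j', rfl⟩
    · have : ι₁ i' ≠ ι₂ i' := by simpa [initState] using hq'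
      rw [huniq i' this]
    · exact absurd (by simp [initState]) hq'
    · exact absurd (by simp [initState]) hq'

lemma chain_exists (C : Circuit m k n) {ℓ : ℕ} (ι : Fin (ℓ + 1) → Fin m → BM)
    (hι : PivotalSeq ι) (r : ℕ) :
    ∀ i : Fin (ℓ + 1), ∃ s t : CState m k n,
      Relation.ReflTransGen
        (fun x y => vadj x.toVec y.toVec ∧
          (∃ i', x ∈ reach C r (initState C (ι i'))) ∧
          (∃ i', y ∈ reach C r (initState C (ι i')))) s t ∧
      s ∈ reach C r (initState C (ι 0)) ∧ t ∈ reach C r (initState C (ι i)) := by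
  intro i
  induction i using Fin.induction with
  | zero =>
    obtain ⟨s, hs⟩ := reach_nonempty C r (initState C (ι 0))
    exact ⟨s, s, Relation.ReflTransGen.refl, hs, hs⟩
  | succ i ih =>
    obtain ⟨s, t, hc, hs, ht⟩ := ih
    obtain ⟨j, hne, hm, huniq⟩ := hι i
    rcases hm with hm | hm
    · -- castSucc side is metastable
      have hmadj : madj (initState C (ι i.succ)).toVec
          (initState C (ι i.castSucc)).toVec :=
        init_madj C j (fun h => hne h.symm) hm (fun j' h => huniq j' (fun h' => h h'.symm))
      obtain ⟨t₂, ht₂⟩ := reach_nonempty C r (initState C (ι i.succ))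
      obtain ⟨t₁, ht₁, hcase⟩ := transfer_reach hmadj r ht₂
      have chainmid : Relation.ReflTransGen
          (fun x y => vadj x.toVec y.toVec ∧
            (∃ i', x ∈ reach C r (initState C (ι i'))) ∧
            (∃ i', y ∈ reach C r (initState C (ι i')))) t t₁ :=
        Relation.ReflTransGen.mono
          (fun p q hpq => ⟨hpq.1, ⟨i.castSucc, hpq.2.1⟩, ⟨i.castSucc, hpq.2.2⟩⟩) _ _
          (reach_conn C r (initState C (ι i.castSucc)) ht ht₁)
      rcases hcase with rfl | hadj
      · exact ⟨s, t₁, hc.trans chainmid, hs, ht₂⟩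
      · exact ⟨s, t₂, (hc.trans chainmid).tail
          ⟨madj_vadj' hadj, ⟨i.castSucc, ht₁⟩, ⟨i.succ, ht₂⟩⟩, hs, ht₂⟩
    · -- succ side is metastable
      have hmadj : madj (initState C (ι i.castSucc)).toVec
          (initState C (ι i.succ)).toVec := init_madj C j hne hm huniq
      obtain ⟨t', ht', hcase⟩ := transfer_reach hmadj r ht
      rcases hcase with rfl | hadj
      · exact ⟨s, t', hc, hs, ht'⟩
      · exact ⟨s, t', hc.tail ⟨madj_vadj hadj, ⟨i.castSucc, ht⟩, ⟨i.succ, ht'⟩⟩,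
          hs, ht'⟩

lemma rtg_to_pivseq {P : CState m k n → Prop} {a b : CState m k n}
    (h : Relation.ReflTransGen (fun x y => vadj x.toVec y.toVec ∧ P x ∧ P y) a b)
    (ha : P a) :
    ∃ ℓ' : ℕ, ∃ y : Fin (ℓ' + 1) → CState m k n,
      PivotalSeq (fun j => (y j).toVec) ∧ (∀ j, P (y j)) ∧
      y 0 = a ∧ y (Fin.last ℓ') = b := by
  induction h with
  | refl =>
    exact ⟨0, fun _ => a, fun i => i.elim0, fun _ => ha, rfl, rfl⟩
  | @tail c d hac hrel ih =>
    obtain ⟨ℓ', y, hpiv, hP, hy0, hyl⟩ := ih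
    refine ⟨ℓ' + 1, Fin.snoc y d, ?_, ?_, ?_, ?_⟩
    · intro i
      refine Fin.lastCases ?_ ?_ i
      · have h1 : (Fin.snoc y d : Fin (ℓ' + 1 + 1) → CState m k n)
            (Fin.last ℓ').castSucc = y (Fin.last ℓ') := Fin.snoc_castSucc _ _ _
        have h2 : (Fin.snoc y d : Fin (ℓ' + 1 + 1) → CState m k n)
            (Fin.last ℓ').succ = d := by
          rw [Fin.succ_last]
          exact Fin.snoc_last _ _
        simp only [h1, h2, hyl]
        exact hrel.1
      · intro i'
        have h1 : (Fin.snoc y d : Fin (ℓ' + 1 + 1) → CState m k n)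
            i'.castSucc.castSucc = y i'.castSucc := Fin.snoc_castSucc _ _ _
        have h2 : (Fin.snoc y d : Fin (ℓ' + 1 + 1) → CState m k n)
            i'.castSucc.succ = y i'.succ := by
          rw [Fin.succ_castSucc]
          exact Fin.snoc_castSucc _ _ _
        simp only [h1, h2]
        exact hpiv i'
    · intro j
      refine Fin.lastCases ?_ ?_ j
      · rw [Fin.snoc_last]
        exact hrel.2.2
      · intro j'
        rw [Fin.snoc_castSucc]
        exact hP j'
    · show (Fin.snoc y d : Fin (ℓ' + 1 + 1) → CState m k n) (Fin.castSucc 0) = a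
      rw [Fin.snoc_castSucc]
      exact hy0
    · rw [Fin.snoc_last]

end PivAux4
/-- given a pivotal sequence of inputs `(ι^(i))_{i ∈ [ℓ+1]}` of a
circuit `C` with initialization `x_0`, for every `r ∈ ℕ` there is a pivotal sequence
of states `(y^(j))_{j ∈ [ℓ'+1]}`, each attainable after `r` rounds from some
`ι^(i) ∘ x_0`, with `y^(0) ∈ S^C_r(ι^(0) ∘ x_0)` and `y^(ℓ') ∈ S^C_r(ι^(ℓ) ∘ x_0)`. -/
theorem pivotal_reachable_sequence {m k n ℓ : ℕ} (C : Circuit m k n)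
    (ι : Fin (ℓ + 1) → Fin m → BM) (hι : PivotalSeq ι) (r : ℕ) (hr : 0 < r) :
    ∃ ℓ' : ℕ, ∃ y : Fin (ℓ' + 1) → CState m k n,
      PivotalSeq (fun j => (y j).toVec) ∧
      (∀ j, ∃ i, y j ∈ reach C r (initState C (ι i))) ∧
      y 0 ∈ reach C r (initState C (ι 0)) ∧
      y (Fin.last ℓ') ∈ reach C r (initState C (ι (Fin.last ℓ))) := by
  obtain ⟨s, t, hc, hs, ht⟩ := chain_exists C ι hι r (Fin.last ℓ)
  obtain ⟨ℓ', y, hpiv, hP, hy0, hyl⟩ := rtg_to_pivseq hc ⟨0, hs⟩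
  refine ⟨ℓ', y, hpiv, hP, ?_, ?_⟩
  · rw [hy0]
    exact hs
  · rw [hyl]
    exact ht
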